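/- arXiv:1706.00105 — 4 statements merged into one kernel-verified Lean document; each statement's English description precedes it below -/
import Mathlib

section
/- Let G be a finite graph with edge-labeling α: E → Z, let p be prime and β ≥ 1. Let W ⊆ V be an equivalence class of the relation 'connected by a path of edges whose labels are divisible by p^β'. Then the vertex-labeling b with b(v) = p^{β-1} (mod p^β) for v ∈ W and b(v) = 0 for v ∉ W is a spline on (G, α) over Z/p^βZ. -/
open scoped Classical

lemma key {p β : ℕ} (hp : p.Prime) (hβ : 1 ≤ β) (a : ℤ) (ha : ¬ (p : ℤ) ^ β ∣ a) :
    ((a : ZMod (p ^ β)) ∣ (p : ZMod (p ^ β)) ^ (β - 1)) := by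
  have ha0 : a ≠ 0 := by rintro rfl; exact ha (dvd_zero _)
  have hfin : FiniteMultiplicity (p : ℤ) a :=
    Int.finiteMultiplicity_iff.2 ⟨by simpa using hp.ne_one, ha0⟩
  obtain ⟨u, hau, hu⟩ := hfin.exists_eq_pow_mul_and_not_dvd
  set k := multiplicity (p : ℤ) a with hkdef
  rw [hau] at ha ⊢
  have hk : k < β := by
    by_contra h
    exact ha (dvd_mul_of_dvd_left (pow_dvd_pow _ (le_of_not_gt h)) u)
  haveI : NeZero (p ^ β) := ⟨pow_ne_zero _ hp.pos.ne'⟩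
  have hpd : ¬ p ∣ u.natAbs := fun hd => hu (Int.natCast_dvd.2 hd)
  have hcop : Nat.Coprime u.natAbs (p ^ β) :=
    Nat.Coprime.pow_right _ ((hp.coprime_iff_not_dvd.2 hpd).symm)
  have hunitN : IsUnit ((u.natAbs : ZMod (p ^ β))) := (ZMod.isUnit_iff_coprime _ _).2 hcop
  have hunit : IsUnit ((u : ZMod (p ^ β))) := by
    rcases Int.natAbs_eq u with h | h
    · rw [h, Int.cast_natCast]; exact hunitN
    · rw [h, Int.cast_neg, Int.cast_natCast]; exact hunitN.neg
  have h1 : ((((p : ℤ) ^ k * u : ℤ) : ZMod (p ^ β))) = (p : ZMod (p ^ β)) ^ k * (u : ZMod (p ^ β)) := by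
    push_cast; ring
  rw [h1]
  have h2 : (p : ZMod (p ^ β)) ^ (β - 1) = (p : ZMod (p ^ β)) ^ k * (p : ZMod (p ^ β)) ^ (β - 1 - k) := by
    rw [← pow_add]; congr 1; omega
  rw [h2]
  exact mul_dvd_mul dvd_rfl (hunit.dvd)

/-- For a zero-connected component `W` of `G` mod `p^β` (an equivalence class
of the relation "joined by a path of edges whose labels are divisible by `p^β`"), the
vertex-labeling equal to `p^(β-1)` on `W` and `0` elsewhere is a spline over `ZMod (p^β)`. -/
theorem component_spline_is_spline
    {V : Type*} [Fintype V] (E : V → V → Prop) (hsymm : Symmetric E)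
    (hirrefl : Irreflexive E) (α : V → V → ℤ) (hαsymm : ∀ u v, α u v = α v u)
    (p : ℕ) (hp : p.Prime) (β : ℕ) (hβ : 1 ≤ β)
    (u₀ : V)
    (W : Set V)
    (hW : W = {w : V | Relation.EqvGen (fun a b => E a b ∧ (p : ℤ) ^ β ∣ α a b) u₀ w})
    (b : V → ZMod (p ^ β))
    (hb : b = fun v => if v ∈ W then ((p : ZMod (p ^ β)) ^ (β - 1)) else 0) :
    ∀ x y : V, E x y → b x - b y ∈ Ideal.span {((α x y : ℤ) : ZMod (p ^ β))} := by
  intro x y hxy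
  subst hb
  by_cases hx : x ∈ W <;> by_cases hy : y ∈ W <;> simp only [hx, hy, if_pos, if_neg,
    if_true, if_false, sub_zero, zero_sub, sub_self]
  · exact zero_mem _
  · have hnd : ¬ (p : ℤ) ^ β ∣ α x y := by
      intro hd
      apply hy
      rw [hW] at hx ⊢
      exact Relation.EqvGen.trans _ _ _ hx (Relation.EqvGen.rel _ _ ⟨hxy, hd⟩)
    exact Ideal.mem_span_singleton.2 (key hp hβ _ hnd)
  · have hnd : ¬ (p : ℤ) ^ β ∣ α x y := by
      intro hd
      apply hx
      rw [hW] at hy ⊢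
      refine Relation.EqvGen.trans _ _ _ hy (Relation.EqvGen.rel _ _ ⟨hsymm hxy, ?_⟩)
      rw [hαsymm]; exact hd
    exact Ideal.mem_span_singleton.2 ((dvd_neg).2 (key hp hβ _ hnd))
  · exact zero_mem _
end

section
/- Let G be a finite graph with edge-labeling α: E → Z such that every edge label α(e) divides the integer m. If q is a spline on (G, α) over Z/mZ and p ∈ Z^V is any integer vertex-labeling with p(v) ≡ q(v) (mod m) for all v, then p is a spline on (G, α) over Z, i.e., α(uv) divides p(u) - p(v) for every edge uv. -/
/-- If every edge label divides `m`, `q` is a spline over `ZMod m`,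
and `f : V → ℤ` lifts `q` (vertexwise mod `m`), then `f` is an integer spline:
`α u v ∣ f u - f v` for every edge. -/
theorem lift_of_spline_mod_m_is_integer_spline
    {V : Type*} [Fintype V] (E : V → V → Prop) (hsymm : Symmetric E)
    (hirrefl : Irreflexive E) (α : V → V → ℤ)
    (m : ℕ) (hm : 0 < m)
    (hedge : ∀ u v : V, E u v → α u v ∣ (m : ℤ))
    (q : V → ZMod m)
    (hq : ∀ u v : V, E u v → q u - q v ∈ Ideal.span {((α u v : ℤ) : ZMod m)})
    (f : V → ℤ) (hlift : ∀ v : V, ((f v : ℤ) : ZMod m) = q v) :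
    ∀ u v : V, E u v → α u v ∣ f u - f v := by
  intro u v he
  obtain ⟨c, hc⟩ := Ideal.mem_span_singleton'.mp (hq u v he)
  haveI : NeZero m := ⟨hm.ne'⟩
  set c' : ℤ := (c.val : ℤ) with hc'def
  have hc' : ((c' : ℤ) : ZMod m) = c := by
    simp [hc'def, ZMod.natCast_val, ZMod.intCast_cast]
  have hmdvd : (m : ℤ) ∣ (f u - f v - c' * α u v) := by
    have : ((f u - f v - c' * α u v : ℤ) : ZMod m) = 0 := by
      push_cast
      rw [hlift u, hlift v, hc', ← hc]; ring
    exact (ZMod.intCast_zmod_eq_zero_iff_dvd _ _).mp this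
  have h1 : α u v ∣ (f u - f v - c' * α u v) := (hedge u v he).trans hmdvd
  have h2 : α u v ∣ c' * α u v := Dvd.intro_left _ rfl
  have := dvd_add h1 h2
  simpa using this
end

section
/- Let G be a finite connected graph with edge-labeling α: E → Z and let p be prime. Every spline f on (G, α) over Z/pZ is constant on each zero-connected component of G mod p; consequently f is a Z/pZ-linear combination of the indicator splines of the zero-connected components (the splines equal to 1 on one zero-connected component and 0 elsewhere). -/
open scoped Classical

/-- Over `ZMod p` (`p` prime), every spline on a finite connected edge-labeled
graph is constant on each zero-connected component mod `p`, and hence is a `ZMod p`-linear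
combination of the indicator splines of the zero-connected components. -/
theorem spline_mod_p_combination_of_indicators
    {V : Type*} [Fintype V] (E : V → V → Prop) (hsymm : Symmetric E)
    (hirrefl : Irreflexive E) (α : V → V → ℤ) (hαsymm : ∀ u v, α u v = α v u)
    (hconn : ∀ u v : V, Relation.ReflTransGen E u v)
    (p : ℕ) (hp : p.Prime)
    (f : V → ZMod p)
    (hf : ∀ u v : V, E u v → f u - f v ∈ Ideal.span {((α u v : ℤ) : ZMod p)}) :
    (∀ u v : V,
        Relation.EqvGen (fun a b => E a b ∧ (p : ℤ) ∣ α a b) u v → f u = f v)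
    ∧ ∃ (S : Finset V) (c : V → ZMod p),
        (∀ w ∈ S, ∀ w' ∈ S, w ≠ w' →
          ¬ Relation.EqvGen (fun a b => E a b ∧ (p : ℤ) ∣ α a b) w w')
        ∧ (∀ v : V, ∃ w ∈ S,
            Relation.EqvGen (fun a b => E a b ∧ (p : ℤ) ∣ α a b) w v)
        ∧ f = ∑ w ∈ S, c w •
            (fun v => if Relation.EqvGen (fun a b => E a b ∧ (p : ℤ) ∣ α a b) w v
              then (1 : ZMod p) else 0) := by
  set R : V → V → Prop := fun a b => E a b ∧ (p : ℤ) ∣ α a b with hR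
  have hconst : ∀ u v : V, Relation.EqvGen R u v → f u = f v := by
    intro u v h
    induction h with
    | rel a b hab =>
        have h0 : ((α a b : ℤ) : ZMod p) = 0 := by
          exact_mod_cast (ZMod.intCast_zmod_eq_zero_iff_dvd _ _).2 hab.2
        have := hf a b hab.1
        rw [h0] at this
        simpa [Ideal.span_singleton_eq_bot.mpr rfl, sub_eq_zero] using this
    | refl a => rfl
    | symm a b _ ih => exact ih.symm
    | trans a b c _ _ ih1 ih2 => exact ih1.trans ih2
  refine ⟨hconst, ?_⟩
  letI s : Setoid V := Relation.EqvGen.setoid R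
  have hsr : ∀ a b : V, (s.r a b ↔ Relation.EqvGen R a b) := fun a b => Iff.rfl
  set rep : V → V := fun v => (Quotient.mk s v).out with hrep
  have hrep_eqv : ∀ v : V, Relation.EqvGen R (rep v) v := by
    intro v
    have := Quotient.mk_out (s := s) v
    exact this
  have hrep_fix : ∀ v : V, rep (rep v) = rep v := by
    intro v
    show (Quotient.mk s (Quotient.mk s v).out).out = (Quotient.mk s v).out
    rw [Quotient.out_eq]
  refine ⟨Finset.univ.image rep, fun w => f w, ?_, ?_, ?_⟩
  · intro w hw w' hw' hne h
    obtain ⟨u, _, rfl⟩ := Finset.mem_image.1 hw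
    obtain ⟨u', _, rfl⟩ := Finset.mem_image.1 hw'
    apply hne
    have : Quotient.mk s (rep u) = Quotient.mk s (rep u') := Quotient.sound h
    calc rep u = rep (rep u) := (hrep_fix u).symm
      _ = (Quotient.mk s (rep u)).out := rfl
      _ = (Quotient.mk s (rep u')).out := by rw [this]
      _ = rep u' := hrep_fix u'
  · intro v
    exact ⟨rep v, Finset.mem_image.2 ⟨v, Finset.mem_univ v, rfl⟩, hrep_eqv v⟩
  · funext v
    rw [Finset.sum_apply]
    rw [Finset.sum_eq_single_of_mem (rep v)
      (Finset.mem_image.2 ⟨v, Finset.mem_univ v, rfl⟩)]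
    · simp only [Pi.smul_apply, smul_eq_mul, if_pos (hrep_eqv v), mul_one]
      exact (hconst _ _ (hrep_eqv v)).symm
    · intro w hw hne
      obtain ⟨u, _, rfl⟩ := Finset.mem_image.1 hw
      have : ¬ Relation.EqvGen R (rep u) v := by
        intro h
        apply hne
        have h2 : Relation.EqvGen R (rep u) (rep v) :=
          h.trans _ _ _ ((hrep_eqv v).symm _ _)
        have : Quotient.mk s (rep u) = Quotient.mk s (rep v) := Quotient.sound h2
        calc rep u = rep (rep u) := (hrep_fix u).symm
          _ = (Quotient.mk s (rep u)).out := rfl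
          _ = (Quotient.mk s (rep v)).out := by rw [this]
          _ = rep v := hrep_fix v
      simp [this]
end

section
/- Let G be a finite graph with edge-labeling α: E → Z, let m = p1^{e1}⋯pt^{et} with distinct primes pi, and let u, v ∈ V. Then every spline f over Z/mZ on (G, α) satisfies f(u) = f(v) if and only if for every i, the vertices u and v lie in the same zero-connected component of G mod pi^{ei}. -/
/-- Divisibility of integer casts in `ZMod m` is governed by the gcd with `m`. -/
lemma SplineAux.cast_dvd_iff (m : ℕ) (a b : ℤ) :
    (a : ZMod m) ∣ (b : ZMod m) ↔ (Int.gcd a m : ℤ) ∣ b := by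
  constructor
  · rintro ⟨t, ht⟩
    obtain ⟨t', rfl⟩ := ZMod.intCast_surjective (n := m) t
    have h0 : ((b - a * t' : ℤ) : ZMod m) = 0 := by push_cast; rw [ht]; ring
    rw [ZMod.intCast_zmod_eq_zero_iff_dvd] at h0
    obtain ⟨k, hk⟩ := h0
    have hb : b = a * t' + (m : ℤ) * k := by linarith
    rw [hb]
    exact dvd_add ((Int.gcd_dvd_left a (m : ℤ)).mul_right _) ((Int.gcd_dvd_right a (m : ℤ)).mul_right _)
  · rintro ⟨c, rfl⟩
    refine ⟨(Int.gcdA a m * c : ℤ), ?_⟩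
    have h := congrArg (fun z : ℤ => (z : ZMod m)) (Int.gcd_eq_gcd_ab a m)
    push_cast at h ⊢
    rw [h]
    simp [ZMod.natCast_self]
    ring

/-- For `m = ∏ pᵢ^{eᵢ}` with distinct primes, all splines over `ZMod m`
agree on two vertices `u, v` if and only if for every `i` the vertices `u` and `v` lie
in the same zero-connected component of `G` mod `pᵢ^{eᵢ}`. -/
theorem spline_values_agree_iff_same_components
    {V : Type*} [Fintype V] (E : V → V → Prop) (hsymm : Symmetric E)
    (hirrefl : Irreflexive E) (α : V → V → ℤ) (hαsymm : ∀ u v, α u v = α v u)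
    {ι : Type*} [Fintype ι] (p : ι → ℕ) (e : ι → ℕ)
    (hp : ∀ i, (p i).Prime) (hinj : Function.Injective p) (he : ∀ i, 1 ≤ e i)
    (m : ℕ) (hm : m = ∏ i, p i ^ e i)
    (u v : V) :
    (∀ f : V → ZMod m,
        (∀ x y : V, E x y → f x - f y ∈ Ideal.span {((α x y : ℤ) : ZMod m)}) →
        f u = f v)
      ↔ ∀ i : ι,
          Relation.EqvGen (fun a b => E a b ∧ ((p i : ℤ)) ^ (e i) ∣ α a b) u v := by
  classical
  have hm0 : 0 < m := by
    rw [hm]; exact Finset.prod_pos fun i _ => pow_pos (hp i).pos _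
  haveI : NeZero m := ⟨hm0.ne'⟩
  have hpe_dvd_m : ∀ i, p i ^ e i ∣ m := fun i => by
    rw [hm]; exact Finset.dvd_prod_of_mem _ (Finset.mem_univ i)
  constructor
  · -- all splines agree → same components
    intro hall i
    by_contra hne
    -- construct a separating spline
    set R : V → V → Prop := fun a b => E a b ∧ ((p i : ℤ)) ^ (e i) ∣ α a b with hR
    set c : ℕ := m / p i with hc
    have hpdvdm : p i ∣ m :=
      dvd_trans (dvd_pow_self _ (Nat.one_le_iff_ne_zero.mp (he i))) (hpe_dvd_m i)
    have hc_pos : 0 < c := Nat.div_pos (Nat.le_of_dvd hm0 hpdvdm) (hp i).pos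
    have hc_lt : c < m := Nat.div_lt_self hm0 (hp i).one_lt
    -- m / p i = p i ^ (e i - 1) * M where M is the product of the other prime powers
    set M : ℕ := ∏ j ∈ Finset.univ.erase i, p j ^ e j with hM
    have hmM : m = p i ^ e i * M := by
      rw [hm, hM]
      exact (Finset.mul_prod_erase Finset.univ (fun j => p j ^ e j) (Finset.mem_univ i)).symm
    have hcM : c = p i ^ (e i - 1) * M := by
      have he1 : 1 ≤ e i := he i
      have h2 : p i ^ e i = p i * p i ^ (e i - 1) := by
        conv_lhs => rw [show e i = (e i - 1) + 1 by omega]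
        rw [pow_succ']
      have : m = p i * (p i ^ (e i - 1) * M) := by rw [hmM, h2, mul_assoc]
      rw [hc, this, Nat.mul_div_cancel_left _ (hp i).pos]
    have hcopM : Nat.Coprime (p i) M := by
      refine Nat.Coprime.prod_right fun j hj => ?_
      have hij : p i ≠ p j := fun h =>
        (Finset.mem_erase.mp hj).1 (hinj h).symm
      exact ((Nat.coprime_primes (hp i) (hp j)).mpr hij).pow_right _
    -- the separating function
    set f : V → ZMod m := fun x =>
      if Relation.EqvGen R u x then (c : ZMod m) else 0 with hf
    -- key divisibility fact for edges crossing the component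
    have hkey : ∀ x y : V, E x y → ¬ ((p i : ℤ)) ^ (e i) ∣ α x y →
        ((α x y : ℤ) : ZMod m) ∣ ((c : ℤ) : ZMod m) := by
      intro x y _ hnd
      rw [SplineAux.cast_dvd_iff]
      set g : ℕ := Int.gcd (α x y) (m : ℤ) with hg
      have hgm : g ∣ m := by
        have h := Int.gcd_dvd_right (a := α x y) (b := (m : ℤ))
        exact_mod_cast h
      have hgα : (g : ℤ) ∣ α x y := Int.gcd_dvd_left _ _
      have hpg : ¬ p i ^ e i ∣ g := by
        intro hdvd
        exact hnd (dvd_trans (by exact_mod_cast Int.natCast_dvd_natCast.mpr hdvd) hgα)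
      -- decompose g into p-part and p-free part
      set w : ℕ := g.factorization (p i) with hw
      have hg0 : g ≠ 0 := by
        intro h0
        rw [h0] at hpg
        exact hpg (dvd_zero _)
      have hsplit : p i ^ w * (g / p i ^ w) = g := Nat.ordProj_mul_ordCompl_eq_self g (p i)
      have hwlt : w ≤ e i - 1 := by
        by_contra hlt
        exact hpg (dvd_trans (pow_dvd_pow _ (by omega)) (Nat.ordProj_dvd g (p i)))
      have hcop' : Nat.Coprime (g / p i ^ w) (p i ^ e i) :=
        ((Nat.coprime_ordCompl (hp i) hg0).symm).pow_right _
      have hg'M : g / p i ^ w ∣ M := by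
        have h1 : g / p i ^ w ∣ g := Nat.div_dvd_of_dvd (Nat.ordProj_dvd g (p i))
        have h2 : g / p i ^ w ∣ p i ^ e i * M := hmM ▸ h1.trans hgm
        exact (Nat.Coprime.dvd_of_dvd_mul_left hcop' h2)
      have hgc : g ∣ c := by
        rw [← hsplit, hcM]
        exact mul_dvd_mul (pow_dvd_pow _ hwlt) hg'M
      exact_mod_cast Int.natCast_dvd_natCast.mpr hgc
    -- f is a spline
    have hspline : ∀ x y : V, E x y → f x - f y ∈ Ideal.span {((α x y : ℤ) : ZMod m)} := by
      intro x y hxy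
      rw [Ideal.mem_span_singleton]
      by_cases hd : ((p i : ℤ)) ^ (e i) ∣ α x y
      · -- edge inside: components agree
        have hiff : Relation.EqvGen R u x ↔ Relation.EqvGen R u y :=
          ⟨fun h => h.trans _ _ _ (Relation.EqvGen.rel _ _ ⟨hxy, hd⟩),
           fun h => h.trans _ _ _ ((Relation.EqvGen.rel x y ⟨hxy, hd⟩).symm _ _)⟩
        simp only [hf]
        by_cases hx : Relation.EqvGen R u x
        · rw [if_pos hx, if_pos (hiff.mp hx), sub_self]
          exact dvd_zero _
        · rw [if_neg hx, if_neg (fun h => hx (hiff.mpr h)), sub_self]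
          exact dvd_zero _
      · have hcd := hkey x y hxy hd
        simp only [hf]
        by_cases hx : Relation.EqvGen R u x <;> by_cases hy : Relation.EqvGen R u y <;>
          simp only [if_pos, if_neg, hx, hy, if_true, if_false, sub_self, sub_zero, zero_sub,
            dvd_zero]
        · push_cast at hcd
          exact hcd
        · push_cast at hcd
          exact hcd.neg_right
    have := hall f hspline
    simp only [hf] at this
    rw [if_pos (Relation.EqvGen.refl u), if_neg hne] at this
    rw [ZMod.natCast_eq_zero_iff] at this
    exact absurd (Nat.le_of_dvd hc_pos this) (by omega)
  · -- same components → all splines agree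
    intro hcomp f hf
    have key : ∀ i : ι, ((p i : ZMod m)) ^ (e i) ∣ f u - f v := by
      intro i
      have : ∀ a b : V, Relation.EqvGen
          (fun a b => E a b ∧ ((p i : ℤ)) ^ (e i) ∣ α a b) a b →
          ((p i : ZMod m)) ^ (e i) ∣ f a - f b := by
        intro a b h
        induction h with
        | rel x y hxy =>
          obtain ⟨hE, hdvd⟩ := hxy
          have h1 : ((α x y : ℤ) : ZMod m) ∣ f x - f y :=
            Ideal.mem_span_singleton.mp (hf x y hE)
          have h2 : ((p i : ZMod m)) ^ (e i) ∣ ((α x y : ℤ) : ZMod m) := by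
            obtain ⟨d, hd⟩ := hdvd
            refine ⟨((d : ℤ) : ZMod m), ?_⟩
            rw [hd]
            push_cast
            ring
          exact h2.trans h1
        | refl x => simp
        | symm x y _ ih => simpa using ih.neg_right
        | trans x y z _ _ ih1 ih2 => simpa using dvd_add ih1 ih2
      exact this u v (hcomp i)
    -- deduce f u - f v = 0 via CRT-style divisibility
    set y : ZMod m := f u - f v with hy
    have hval : ∀ i : ι, p i ^ e i ∣ y.val := by
      intro i
      have h1 : (((p i ^ e i : ℕ) : ℤ) : ZMod m) ∣ ((y.val : ℤ) : ZMod m) := by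
        push_cast
        rw [ZMod.natCast_val, ZMod.cast_id]
        exact key i
      rw [SplineAux.cast_dvd_iff, Int.gcd_natCast_natCast,
        Nat.gcd_eq_left (hpe_dvd_m i)] at h1
      exact_mod_cast h1
    have hmdvd : m ∣ y.val := by
      have : ∀ i : ι, ((p i ^ e i : ℕ) : ℤ) ∣ (y.val : ℤ) :=
        fun i => Int.natCast_dvd_natCast.mpr (hval i)
      have hprod : (∏ i : ι, ((p i ^ e i : ℕ) : ℤ)) ∣ (y.val : ℤ) := by
        refine Finset.prod_dvd_of_coprime ?_ (fun i _ => this i)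
        intro i _ j _ hij
        simp only [Function.onFun]
        rw [Nat.isCoprime_iff_coprime]
        exact Nat.Coprime.pow _ _ ((Nat.coprime_primes (hp i) (hp j)).mpr
          (fun h => hij (hinj h)))
      rw [← Nat.cast_prod] at hprod
      have hprodN : (∏ i, p i ^ e i) ∣ y.val := by exact_mod_cast hprod
      rwa [← hm] at hprodN
    have hv0 : y.val = 0 := Nat.eq_zero_of_dvd_of_lt hmdvd (ZMod.val_lt y)
    have hy0 : y = 0 := by
      rwa [ZMod.val_eq_zero] at hv0
    exact sub_eq_zero.mp hy0
end
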